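/- Let g = (Mₙ) be a bounded sequence of real 2×2 matrices such that Mₙ² + Id → 0 and the sequences ‖Mₙ‖ and ‖Mₙ⁻¹‖ are bounded by C (each Mₙ invertible). Then there exist a sequence (Nₙ) of real 2×2 matrices with Nₙ² = -Id for all n, Mₙ - Nₙ → 0, and an invertible bounded sequence (Pₙ) with ‖Pₙ‖, ‖Pₙ⁻¹‖ bounded, such that Nₙ = Pₙ · J · Pₙ⁻¹ for all n, where J = [[0,-1],[1,0]]. -/

import Mathlib

set_option maxHeartbeats 1000000


/-- The ℓ¹-norm of a 2×2 real matrix (all norms on `Matrix (Fin 2) (Fin 2) ℝ`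
are equivalent). -/
def matNorm (P : Matrix (Fin 2) (Fin 2) ℝ) : ℝ := ∑ i, ∑ j, |P i j|

lemma matNorm_def (P : Matrix (Fin 2) (Fin 2) ℝ) :
    matNorm P = |P 0 0| + |P 0 1| + (|P 1 0| + |P 1 1|) := by
  simp [matNorm, Fin.sum_univ_two]

lemma matNorm_nonneg (P : Matrix (Fin 2) (Fin 2) ℝ) : 0 ≤ matNorm P := by
  rw [matNorm_def]; positivity

lemma matNorm_fin_two (x y z w : ℝ) : matNorm !![x,y;z,w] = |x| + |y| + (|z| + |w|) := by
  simp [matNorm, Fin.sum_univ_two]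

lemma sq_eq_neg_one {p q u : ℝ} (h : p^2 + q*u = -1) :
    !![p, q; u, -p] * !![p, q; u, -p] = -1 := by
  ext i j
  fin_cases i <;> fin_cases j <;>
    simp [Matrix.mul_apply, Fin.sum_univ_two, Matrix.one_apply] <;> nlinarith [h]

lemma good_case (M : Matrix (Fin 2) (Fin 2) ℝ) (C : ℝ) (hC : matNorm M ≤ C)
    (hr : matNorm (M * M + 1) ≤ 1/4) :
    ∃ N P : Matrix (Fin 2) (Fin 2) ℝ, N * N = -1 ∧
      matNorm (M - N) ≤ (4*C+2) * matNorm (M*M+1) ∧ IsUnit P ∧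
      matNorm P ≤ 2*(2*(C+1))^2 + 2*(2*(C+1)) + 4 ∧
      matNorm P⁻¹ ≤ 2*(2*(C+1))^2 + 2*(2*(C+1)) + 4 ∧
      N = P * !![0,-1;1,0] * P⁻¹ := by
  have hC0 : 0 ≤ C := le_trans (matNorm_nonneg M) hC
  set a := M 0 0 with ha
  set b := M 0 1 with hb
  set c := M 1 0 with hc
  set e := M 1 1 with he
  set r := matNorm (M * M + 1) with hrdef
  have hr0 : 0 ≤ r := matNorm_nonneg _
  have hx0 : (M*M+1) 0 0 = a*a + b*c + 1 := by
    simp [Matrix.mul_apply, Matrix.add_apply, Matrix.one_apply, Fin.sum_univ_two, ha, hb, hc, he]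
  have hx1 : (M*M+1) 0 1 = a*b + b*e := by
    simp [Matrix.mul_apply, Matrix.add_apply, Matrix.one_apply, Fin.sum_univ_two, ha, hb, hc, he]
  have hx2 : (M*M+1) 1 0 = c*a + e*c := by
    simp [Matrix.mul_apply, Matrix.add_apply, Matrix.one_apply, Fin.sum_univ_two, ha, hb, hc, he]
  have hx3 : (M*M+1) 1 1 = c*b + e*e + 1 := by
    simp [Matrix.mul_apply, Matrix.add_apply, Matrix.one_apply, Fin.sum_univ_two, ha, hb, hc, he]
  have hrexp : r = |a*a+b*c+1| + |a*b+b*e| + (|c*a+e*c| + |c*b+e*e+1|) := by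
    rw [hrdef, matNorm_def, hx0, hx1, hx2, hx3]
  have habs : |a| + |b| + (|c| + |e|) ≤ C := by rw [matNorm_def] at hC; exact hC
  -- determinant identity bound
  have h14 : (a*a+b*c+1)*(c*b+e*e+1) ≤ |a*a+b*c+1| * |c*b+e*e+1| := by
    calc (a*a+b*c+1)*(c*b+e*e+1) ≤ |(a*a+b*c+1)*(c*b+e*e+1)| := le_abs_self _
    _ = _ := abs_mul _ _
  have h23 : -((a*b+b*e)*(c*a+e*c)) ≤ |a*b+b*e| * |c*a+e*c| := by
    calc -((a*b+b*e)*(c*a+e*c)) ≤ |(a*b+b*e)*(c*a+e*c)| := neg_le_abs _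
    _ = _ := abs_mul _ _
  have hdetle : (a*e - b*c - 1)^2 + (a+e)^2 ≤ r^2 := by
    have hu : |a*a+b*c+1| * |c*b+e*e+1| + |a*b+b*e| * |c*a+e*c|
        ≤ (|a*a+b*c+1| + |a*b+b*e| + (|c*a+e*c| + |c*b+e*e+1|))^2 := by
      nlinarith [abs_nonneg (a*a+b*c+1), abs_nonneg (a*b+b*e),
        abs_nonneg (c*a+e*c), abs_nonneg (c*b+e*e+1),
        mul_nonneg (abs_nonneg (a*a+b*c+1)) (abs_nonneg (a*b+b*e)),
        mul_nonneg (abs_nonneg (a*a+b*c+1)) (abs_nonneg (c*a+e*c)),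
        mul_nonneg (abs_nonneg (a*b+b*e)) (abs_nonneg (c*b+e*e+1)),
        mul_nonneg (abs_nonneg (c*a+e*c)) (abs_nonneg (c*b+e*e+1)),
        sq_nonneg (|a*a+b*c+1|), sq_nonneg (|a*b+b*e|), sq_nonneg (|c*a+e*c|),
        sq_nonneg (|c*b+e*e+1|)]
    calc (a*e - b*c - 1)^2 + (a+e)^2
        = (a*a+b*c+1)*(c*b+e*e+1) - (a*b+b*e)*(c*a+e*c) := by ring
      _ ≤ |a*a+b*c+1| * |c*b+e*e+1| + |a*b+b*e| * |c*a+e*c| := by linarith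
      _ ≤ (|a*a+b*c+1| + |a*b+b*e| + (|c*a+e*c| + |c*b+e*e+1|))^2 := hu
      _ = r^2 := by rw [hrexp]
  have hd : |a*e - b*c - 1| ≤ r := by
    nlinarith [sq_abs (a*e-b*c-1), abs_nonneg (a*e-b*c-1), sq_nonneg (a+e)]
  have ht : |a+e| ≤ r := by
    nlinarith [sq_abs (a+e), abs_nonneg (a+e), sq_nonneg (a*e-b*c-1)]
  clear hx0 hx1 hx2 hx3 hrexp h14 h23 hdetle hC
  have hδ1 : 1/2 ≤ a*e - b*c - (a+e)^2/4 := by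
    nlinarith [neg_abs_le (a*e-b*c-1), sq_abs (a+e), abs_nonneg (a+e)]
  have hδ2 : a*e - b*c - (a+e)^2/4 ≤ 2 := by
    nlinarith [le_abs_self (a*e-b*c-1), sq_nonneg (a+e)]
  obtain ⟨s, hs2, hs0⟩ : ∃ s : ℝ, s^2 = a*e - b*c - (a+e)^2/4 ∧ 0 ≤ s :=
    ⟨Real.sqrt _, Real.sq_sqrt (by linarith), Real.sqrt_nonneg _⟩
  have hs_half : 1/2 ≤ s := by nlinarith
  have hs_le : s ≤ 2 := by nlinarith
  have hs_pos : 0 < s := by linarith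
  have hsabs : |s - 1| ≤ 2*r := by
    have hmul : |s-1| * (s+1) = |s^2 - 1| := by
      rw [← abs_of_pos (show (0:ℝ) < s+1 by linarith), ← abs_mul]
      congr 1
      ring
    have h1 : |s^2 - 1| ≤ 2*r := by
      rw [hs2, abs_le]
      constructor <;>
        nlinarith [neg_abs_le (a*e-b*c-1), le_abs_self (a*e-b*c-1), sq_abs (a+e),
          abs_nonneg (a+e)]
    nlinarith [hmul, h1, mul_nonneg (abs_nonneg (s-1)) hs0]
  have hsne : s ≠ 0 := ne_of_gt hs_pos
  -- the square root of -1
  have hkey : ((a-e)/(2*s))^2 + (b/s)*(c/s) = -1 := by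
    field_simp
    linear_combination 4 * hs2
  refine ⟨!![(a-e)/(2*s), b/s; c/s, -((a-e)/(2*s))], !![1, (a-e)/(2*s); 0, c/s],
    sq_eq_neg_one hkey, ?_, ?_, ?_, ?_, ?_⟩
  · -- norm bound on M - N
    have hinv : |1 - s⁻¹| ≤ 4*r := by
      have h1 : 1 - s⁻¹ = (s-1)/s := by field_simp
      rw [h1, abs_div, abs_of_pos hs_pos, div_le_iff₀ hs_pos]
      linarith [mul_nonneg hr0 (show (0:ℝ) ≤ s - 1/2 by linarith), hsabs]
    have h2 : |(a+e)/(2*s)| ≤ r := by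
      rw [abs_div, abs_of_pos (show (0:ℝ) < 2*s by linarith), div_le_iff₀ (show (0:ℝ) < 2*s by linarith)]
      linarith [mul_nonneg hr0 (show (0:ℝ) ≤ 2*s - 1 by linarith), ht]
    have ha' : |a - (a-e)/(2*s)| ≤ |a| * (4*r) + r := by
      have heq : a - (a-e)/(2*s) = a*(1-s⁻¹) + (a+e)/(2*s) := by field_simp; ring
      rw [heq]
      have h3 := abs_add_le (a*(1-s⁻¹)) ((a+e)/(2*s))
      rw [abs_mul] at h3
      have h4 := mul_le_mul_of_nonneg_left hinv (abs_nonneg a)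
      linarith
    have he' : |e - -((a-e)/(2*s))| ≤ |e| * (4*r) + r := by
      have heq : e - -((a-e)/(2*s)) = e*(1-s⁻¹) + (a+e)/(2*s) := by field_simp; ring
      rw [heq]
      have h3 := abs_add_le (e*(1-s⁻¹)) ((a+e)/(2*s))
      rw [abs_mul] at h3
      have h4 := mul_le_mul_of_nonneg_left hinv (abs_nonneg e)
      linarith
    have hb' : |b - b/s| ≤ |b| * (4*r) := by
      have heq : b - b/s = b*(1-s⁻¹) := by field_simp
      rw [heq, abs_mul]
      exact mul_le_mul_of_nonneg_left hinv (abs_nonneg b)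
    have hc' : |c - c/s| ≤ |c| * (4*r) := by
      have heq : c - c/s = c*(1-s⁻¹) := by field_simp
      rw [heq, abs_mul]
      exact mul_le_mul_of_nonneg_left hinv (abs_nonneg c)
    have hsub : matNorm (M - !![(a-e)/(2*s), b/s; c/s, -((a-e)/(2*s))])
        = |a - (a-e)/(2*s)| + |b - b/s| + (|c - c/s| + |e - -((a-e)/(2*s))|) := by
      rw [matNorm_def]
      simp [Matrix.sub_apply, ha, hb, hc, he]
    rw [hsub]
    linarith [mul_nonneg (show (0:ℝ) ≤ C - (|a| + |b| + (|c| + |e|)) by linarith) hr0,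
      ha', hb', hc', he']
  · -- IsUnit P
    have hune : c/s ≠ 0 := by
      intro h0; rw [h0] at hkey; nlinarith [sq_nonneg ((a-e)/(2*s))]
    refine (Matrix.isUnit_iff_isUnit_det _).2 ?_
    rw [Matrix.det_fin_two_of]
    simpa using hune.isUnit
  · -- matNorm P
    have hpB : |(a-e)/(2*s)| ≤ C := by
      have h1 : |a-e| ≤ |a|+|e| := by simpa [sub_eq_add_neg] using abs_add_le a (-e)
      rw [abs_div, abs_of_pos (show (0:ℝ) < 2*s by linarith), div_le_iff₀ (show (0:ℝ) < 2*s by linarith)]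
      linarith [mul_nonneg hC0 (show (0:ℝ) ≤ 2*s - 1 by linarith), h1, abs_nonneg b, abs_nonneg c]
    have huB : |c/s| ≤ 2*C := by
      rw [abs_div, abs_of_pos hs_pos, div_le_iff₀ hs_pos]
      linarith [mul_nonneg hC0 (show (0:ℝ) ≤ 2*s - 1 by linarith), abs_nonneg a, abs_nonneg b, abs_nonneg e]
    rw [matNorm_fin_two, abs_one, abs_zero]
    nlinarith [hpB, huB]
  · -- matNorm P⁻¹
    have hune : c/s ≠ 0 := by
      intro h0; rw [h0] at hkey; nlinarith [sq_nonneg ((a-e)/(2*s))]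
    have hpB : |(a-e)/(2*s)| ≤ C := by
      have h1 : |a-e| ≤ |a|+|e| := by simpa [sub_eq_add_neg] using abs_add_le a (-e)
      rw [abs_div, abs_of_pos (show (0:ℝ) < 2*s by linarith), div_le_iff₀ (show (0:ℝ) < 2*s by linarith)]
      linarith [mul_nonneg hC0 (show (0:ℝ) ≤ 2*s - 1 by linarith), h1, abs_nonneg b, abs_nonneg c]
    have hqB : |b/s| ≤ 2*C := by
      rw [abs_div, abs_of_pos hs_pos, div_le_iff₀ hs_pos]
      linarith [mul_nonneg hC0 (show (0:ℝ) ≤ 2*s - 1 by linarith), abs_nonneg a, abs_nonneg c, abs_nonneg e]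
    have hulow : (1:ℝ) ≤ |b/s| * |c/s| := by
      have h1 : (b/s)*(c/s) ≤ -1 := by nlinarith [hkey, sq_nonneg ((a-e)/(2*s))]
      rw [← abs_mul]
      exact le_abs.2 (Or.inr (by linarith))
    have h0 : 0 < |c/s| := abs_pos.2 hune
    have huinv : |(c/s)⁻¹| ≤ 2*C := by
      have h3 : 1/|c/s| ≤ |b/s| := by rw [div_le_iff₀ h0]; linarith
      rw [abs_inv, inv_eq_one_div]
      linarith
    have hPinv : (!![1, (a-e)/(2*s); 0, c/s] : Matrix (Fin 2) (Fin 2) ℝ)⁻¹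
        = !![1, -((a-e)/(2*s)) * (c/s)⁻¹; 0, (c/s)⁻¹] := by
      apply Matrix.inv_eq_right_inv
      rw [Matrix.mul_fin_two]
      ext i j
      have hcne : c ≠ 0 := by
        intro h0; exact hune (by rw [h0]; simp)
      fin_cases i <;> fin_cases j <;>
        simp [Matrix.one_apply] <;> field_simp [hcne]
    rw [hPinv, matNorm_fin_two, abs_one, abs_zero, abs_mul, abs_neg]
    have hprod : |(a-e)/(2*s)| * |(c/s)⁻¹| ≤ C * (2*C) :=
      mul_le_mul hpB huinv (abs_nonneg _) hC0
    nlinarith [huinv, hprod]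
  · -- N = P J P⁻¹
    have hune : c/s ≠ 0 := by
      intro h0; rw [h0] at hkey; nlinarith [sq_nonneg ((a-e)/(2*s))]
    have hdetP : (!![1, (a-e)/(2*s); 0, c/s] : Matrix (Fin 2) (Fin 2) ℝ).det = c/s := by
      rw [Matrix.det_fin_two_of]; ring
    have hPunit : IsUnit (!![1, (a-e)/(2*s); 0, c/s] : Matrix (Fin 2) (Fin 2) ℝ).det := by
      rw [hdetP]; exact hune.isUnit
    have hPP : (!![1, (a-e)/(2*s); 0, c/s] : Matrix (Fin 2) (Fin 2) ℝ) *
        (!![1, (a-e)/(2*s); 0, c/s])⁻¹ = 1 := Matrix.mul_nonsing_inv _ hPunit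
    have hmulNP : !![(a-e)/(2*s), b/s; c/s, -((a-e)/(2*s))] * !![1, (a-e)/(2*s); 0, c/s]
        = !![1, (a-e)/(2*s); 0, c/s] * !![0,-1;1,0] := by
      rw [Matrix.mul_fin_two, Matrix.mul_fin_two]
      ext i j
      fin_cases i <;> fin_cases j <;> simp <;>
        first
        | ring1
        | linear_combination hkey
        | linear_combination -hkey
    calc !![(a-e)/(2*s), b/s; c/s, -((a-e)/(2*s))]
        = !![(a-e)/(2*s), b/s; c/s, -((a-e)/(2*s))] *
          (!![1, (a-e)/(2*s); 0, c/s] * (!![1, (a-e)/(2*s); 0, c/s])⁻¹) := by rw [hPP, mul_one]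
      _ = (!![(a-e)/(2*s), b/s; c/s, -((a-e)/(2*s))] * !![1, (a-e)/(2*s); 0, c/s]) *
          (!![1, (a-e)/(2*s); 0, c/s])⁻¹ := by rw [mul_assoc]
      _ = !![1, (a-e)/(2*s); 0, c/s] * !![0,-1;1,0] * (!![1, (a-e)/(2*s); 0, c/s])⁻¹ := by
          rw [hmulNP]

theorem stmt_19 (M : ℕ → Matrix (Fin 2) (Fin 2) ℝ) (C : ℝ)
    (hunit : ∀ n, IsUnit (M n))
    (hM : ∀ n, matNorm (M n) ≤ C) (hMinv : ∀ n, matNorm (M n)⁻¹ ≤ C)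
    (hsq : Filter.Tendsto (fun n => matNorm (M n * M n + 1)) Filter.atTop (nhds 0)) :
    ∃ (N P : ℕ → Matrix (Fin 2) (Fin 2) ℝ),
      (∀ n, N n * N n = -1) ∧
      Filter.Tendsto (fun n => matNorm (M n - N n)) Filter.atTop (nhds 0) ∧
      (∀ n, IsUnit (P n)) ∧
      (∃ D : ℝ, ∀ n, matNorm (P n) ≤ D ∧ matNorm (P n)⁻¹ ≤ D) ∧
      (∀ n, N n = P n * !![0, -1; 1, 0] * (P n)⁻¹) := by
  have hC0 : 0 ≤ C := le_trans (matNorm_nonneg (M 0)) (hM 0)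
  have hD2 : (2:ℝ) ≤ 2*(2*(C+1))^2 + 2*(2*(C+1)) + 4 := by nlinarith
  have key : ∀ n, ∃ N P : Matrix (Fin 2) (Fin 2) ℝ, N * N = -1 ∧ IsUnit P ∧
      matNorm P ≤ 2*(2*(C+1))^2 + 2*(2*(C+1)) + 4 ∧
      matNorm P⁻¹ ≤ 2*(2*(C+1))^2 + 2*(2*(C+1)) + 4 ∧
      N = P * !![0,-1;1,0] * P⁻¹ ∧
      (matNorm (M n * M n + 1) ≤ 1/4 →
        matNorm (M n - N) ≤ (4*C+2) * matNorm (M n * M n + 1)) := by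
    intro n
    by_cases h : matNorm (M n * M n + 1) ≤ 1/4
    · obtain ⟨N, P, h1, h2, h3, h4, h5, h6⟩ := good_case (M n) C (hM n) h
      exact ⟨N, P, h1, h3, h4, h5, h6, fun _ => h2⟩
    · refine ⟨!![0,-1;1,0], 1, ?_, isUnit_one, ?_, ?_, ?_, fun h' => absurd h' h⟩
      · have := sq_eq_neg_one (p := 0) (q := -1) (u := 1) (by norm_num)
        simpa using this
      · rw [show (1 : Matrix (Fin 2) (Fin 2) ℝ) = !![1,0;0,1] by
            ext i j; fin_cases i <;> fin_cases j <;> simp [Matrix.one_apply]]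
        rw [matNorm_fin_two]
        simp
        linarith
      · rw [inv_one]
        rw [show (1 : Matrix (Fin 2) (Fin 2) ℝ) = !![1,0;0,1] by
            ext i j; fin_cases i <;> fin_cases j <;> simp [Matrix.one_apply]]
        rw [matNorm_fin_two]
        simp
        linarith
      · rw [inv_one, one_mul, mul_one]
  choose N P h1 h2 h3 h4 h5 h6 using key
  refine ⟨N, P, h1, ?_, h2, ⟨_, fun n => ⟨h3 n, h4 n⟩⟩, h5⟩
  have hev : ∀ᶠ n in Filter.atTop, matNorm (M n * M n + 1) ≤ 1/4 :=
    hsq.eventually (eventually_le_nhds (by norm_num))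
  apply squeeze_zero' (g := fun n => (4*C+2) * matNorm (M n * M n + 1))
  · exact Filter.Eventually.of_forall fun n => matNorm_nonneg _
  · exact hev.mono fun n hn => h6 n hn
  · simpa using hsq.const_mul (4*C+2)
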